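/- Let u_∅, u_1, u_2, u_{12} be positive real numbers with u_1·u_2 > u_∅·u_{12}. Then the symmetric 2×2 matrix Θ̂ with θ̂_{11} = u_1/u_∅, θ̂_{22} = u_2/u_∅ and θ̂_{12} = ε·√(u_1 u_2 − u_∅ u_{12})/u_∅ (for either sign ε = ±1) is positive definite and is a critical point of L_u: the partial derivatives of L_u with respect to θ_{11}, θ_{12}, θ_{22} all vanish at Θ̂. -/

import Mathlib

/-- The log-likelihood function of the 2×2 DPP model in the entries
`(θ₁₁, θ₁₂, θ₂₂)` of a symmetric matrix, for data `u = (u∅, u₁, u₂, u₁₂)`. -/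
noncomputable def L2 (u0 u1 u2 u12 : ℝ) (t11 t12 t22 : ℝ) : ℝ :=
  u1 * Real.log t11 + u2 * Real.log t22 + u12 * Real.log (t11 * t22 - t12 ^ 2)
    - (u0 + u1 + u2 + u12) * Real.log (t11 * t22 - t12 ^ 2 + t11 + t22 + 1)

/-- For positive data with `u₁·u₂ > u∅·u₁₂`, the matrix with
`θ̂₁₁ = u₁/u∅`, `θ̂₂₂ = u₂/u∅`, `θ̂₁₂ = ±√(u₁u₂ − u∅u₁₂)/u∅` is positive definite
and is a critical point of the log-likelihood `L_u`. -/
theorem twoByTwo_offdiag_critical (u0 u1 u2 u12 : ℝ)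
    (h0 : 0 < u0) (h1 : 0 < u1) (h2 : 0 < u2) (h12 : 0 < u12)
    (hgt : u1 * u2 > u0 * u12) (ε : ℝ) (hε : ε = 1 ∨ ε = -1)
    (t11 t12 t22 : ℝ)
    (ht11 : t11 = u1 / u0) (ht22 : t22 = u2 / u0)
    (ht12 : t12 = ε * (Real.sqrt (u1 * u2 - u0 * u12) / u0)) :
    (Matrix.of !![t11, t12; t12, t22]).PosDef ∧
      deriv (fun s => L2 u0 u1 u2 u12 s t12 t22) t11 = 0 ∧
      deriv (fun s => L2 u0 u1 u2 u12 t11 s t22) t12 = 0 ∧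
      deriv (fun s => L2 u0 u1 u2 u12 t11 t12 s) t22 = 0 := by
  have hu0 : (u0:ℝ) ≠ 0 := ne_of_gt h0
  have hsub : (0:ℝ) ≤ u1 * u2 - u0 * u12 := by linarith
  have hε2 : ε ^ 2 = 1 := by rcases hε with rfl | rfl <;> norm_num
  have hsq : t12 ^ 2 = (u1 * u2 - u0 * u12) / u0 ^ 2 := by
    rw [ht12, mul_pow, div_pow, Real.sq_sqrt hsub, hε2, one_mul]
  have hD : t11 * t22 - t12 ^ 2 = u12 / u0 := by
    rw [ht11, ht22, hsq]; field_simp; ring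
  have hE : t11 * t22 - t12 ^ 2 + t11 + t22 + 1 = (u0 + u1 + u2 + u12) / u0 := by
    rw [hD, ht11, ht22]; field_simp; ring
  have ht11p : 0 < t11 := by rw [ht11]; positivity
  have ht22p : 0 < t22 := by rw [ht22]; positivity
  have hDp : 0 < t11 * t22 - t12 ^ 2 := by rw [hD]; positivity
  have hEp : 0 < t11 * t22 - t12 ^ 2 + t11 + t22 + 1 := by rw [hE]; positivity
  refine ⟨Matrix.posDef_iff_dotProduct_mulVec.mpr ⟨?_, ?_⟩, ?_, ?_, ?_⟩
  · rw [show Matrix.of !![t11, t12; t12, t22] = !![t11, t12; t12, t22] from rfl]; ext i j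
    fin_cases i <;> fin_cases j <;> simp [Matrix.conjTranspose]
  · intro x hx
    have hx01 : x 0 ≠ 0 ∨ x 1 ≠ 0 := by
      by_contra h
      push_neg at h
      apply hx; ext i; fin_cases i <;> simp [h.1, h.2]
    rw [show Matrix.of !![t11, t12; t12, t22] = !![t11, t12; t12, t22] from rfl]
    simp only [dotProduct, Matrix.mulVec, Fin.sum_univ_two, Matrix.of_apply,
      Matrix.cons_val', Matrix.cons_val_zero, Matrix.cons_val_one, Matrix.head_cons,
      Matrix.empty_val', Matrix.cons_val_fin_one, Matrix.head_fin_const, Pi.star_apply,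
      star_trivial]
    rcases hx01 with h | h
    · have hx2 : 0 < x 0 ^ 2 := by positivity
      nlinarith [sq_nonneg (t12 * x 0 + t22 * x 1), mul_pos hDp hx2]
    · have hx2 : 0 < x 1 ^ 2 := by positivity
      nlinarith [sq_nonneg (t11 * x 0 + t12 * x 1), mul_pos hDp hx2]
  · have hf : HasDerivAt (fun s => L2 u0 u1 u2 u12 s t12 t22)
        (u1 * (1 / t11) + u12 * (t22 / (t11 * t22 - t12 ^ 2))
          - (u0 + u1 + u2 + u12) * ((t22 + 1) / (t11 * t22 - t12 ^ 2 + t11 + t22 + 1))) t11 := by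
      have hA : HasDerivAt (fun s : ℝ => s * t22 - t12 ^ 2) t22 t11 := by
        simpa using ((hasDerivAt_id t11).mul_const t22).sub_const (t12 ^ 2)
      have hB : HasDerivAt (fun s : ℝ => s * t22 - t12 ^ 2 + s + t22 + 1) (t22 + 1) t11 := by
        simpa using ((hA.add (hasDerivAt_id t11)).add_const t22).add_const 1
      have h1' := ((hasDerivAt_id t11).log (ne_of_gt ht11p)).const_mul u1
      have h3' := (hA.log (ne_of_gt hDp)).const_mul u12
      have h4' := (hB.log (ne_of_gt hEp)).const_mul (u0 + u1 + u2 + u12)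
      have := ((h1'.add_const (u2 * Real.log t22)).add h3').sub h4'
      simpa [L2, Pi.add_def, Pi.sub_def, add_right_comm, div_eq_mul_inv, mul_comm, mul_assoc, mul_left_comm]
        using this
    rw [hf.deriv, hE, hD, ht11, ht22]
    field_simp
    ring
  · have hf : HasDerivAt (fun s => L2 u0 u1 u2 u12 t11 s t22)
        (u12 * (-(2 * t12) / (t11 * t22 - t12 ^ 2))
          - (u0 + u1 + u2 + u12) * (-(2 * t12) / (t11 * t22 - t12 ^ 2 + t11 + t22 + 1))) t12 := by
      have hA : HasDerivAt (fun s : ℝ => t11 * t22 - s ^ 2) (-(2 * t12)) t12 := by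
        simpa [Pi.sub_def] using (hasDerivAt_const t12 (t11 * t22)).sub (hasDerivAt_pow 2 t12)
      have hB : HasDerivAt (fun s : ℝ => t11 * t22 - s ^ 2 + t11 + t22 + 1) (-(2 * t12)) t12 := by
        simpa using ((hA.add_const t11).add_const t22).add_const 1
      have h3' := (hA.log (ne_of_gt hDp)).const_mul u12
      have h4' := (hB.log (ne_of_gt hEp)).const_mul (u0 + u1 + u2 + u12)
      have := h3'.sub h4'
      have h5 := this.const_add (u1 * Real.log t11 + u2 * Real.log t22)
      simpa [L2, add_sub_assoc, div_eq_mul_inv, mul_comm, mul_assoc, mul_left_comm] using h5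
    rw [hf.deriv, hE, hD]
    field_simp
    ring
  · have hf : HasDerivAt (fun s => L2 u0 u1 u2 u12 t11 t12 s)
        (u2 * (1 / t22) + u12 * (t11 / (t11 * t22 - t12 ^ 2))
          - (u0 + u1 + u2 + u12) * ((t11 + 1) / (t11 * t22 - t12 ^ 2 + t11 + t22 + 1))) t22 := by
      have hA : HasDerivAt (fun s : ℝ => t11 * s - t12 ^ 2) t11 t22 := by
        simpa using ((hasDerivAt_id t22).const_mul t11).sub_const (t12 ^ 2)
      have hB : HasDerivAt (fun s : ℝ => t11 * s - t12 ^ 2 + t11 + s + 1) (t11 + 1) t22 := by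
        simpa using (((hA.add_const t11).add (hasDerivAt_id t22)).add_const 1)
      have h2' := ((hasDerivAt_id t22).log (ne_of_gt ht22p)).const_mul u2
      have h3' := (hA.log (ne_of_gt hDp)).const_mul u12
      have h4' := (hB.log (ne_of_gt hEp)).const_mul (u0 + u1 + u2 + u12)
      have := (((h2'.const_add (u1 * Real.log t11)).add h3').sub h4')
      simpa [L2, Pi.add_def, Pi.sub_def, div_eq_mul_inv, mul_comm, mul_assoc, mul_left_comm] using this
    rw [hf.deriv, hE, hD, ht11, ht22]
    field_simp
    ring
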